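/- arXiv:2105.13211 — 3 statements merged into one kernel-verified Lean document; each statement's English description precedes it below -/
import Mathlib

section
/- The function a : [0, π) → ℝ defined by a(0) = 1 and a(x) = x·cot(x) for 0 < x < π is strictly decreasing on [0, π). -/
open Real Set

lemma cot_hasDerivAt {x : ℝ} (hs : Real.sin x ≠ 0) :
    HasDerivAt Real.cot (-(1 / Real.sin x ^ 2)) x := by
  have h : HasDerivAt (fun y => Real.cos y / Real.sin y)
      ((-Real.sin x * Real.sin x - Real.cos x * Real.cos x) / Real.sin x ^ 2) x :=
    (Real.hasDerivAt_cos x).div (Real.hasDerivAt_sin x) hs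
  have : (-Real.sin x * Real.sin x - Real.cos x * Real.cos x) / Real.sin x ^ 2
      = -(1 / Real.sin x ^ 2) := by
    have := Real.sin_sq_add_cos_sq x
    field_simp
    nlinarith
  rw [this] at h
  exact h.congr_of_eventuallyEq <| by
    filter_upwards with y using Real.cot_eq_cos_div_sin y

lemma xcot_lt_one {y : ℝ} (h0 : 0 < y) (hπ : y < Real.pi) : y * Real.cot y < 1 := by
  have hs : 0 < Real.sin y := Real.sin_pos_of_pos_of_lt_pi h0 hπ
  rw [Real.cot_eq_cos_div_sin]
  have key : y * Real.cos y < Real.sin y := by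
    rcases lt_or_ge y (Real.pi / 2) with hy | hy
    · have hc : 0 < Real.cos y := Real.cos_pos_of_mem_Ioo ⟨by linarith, hy⟩
      have := Real.lt_tan h0 hy
      rw [Real.tan_eq_sin_div_cos, lt_div_iff₀ hc] at this
      linarith
    · have hc : Real.cos y ≤ 0 := Real.cos_nonpos_of_pi_div_two_le_of_le hy (by linarith [Real.pi_pos])
      nlinarith
  calc y * (Real.cos y / Real.sin y) = y * Real.cos y / Real.sin y := by ring
    _ < 1 := (div_lt_one hs).mpr (by linarith)

lemma g_hasDerivAt {x : ℝ} (hs : Real.sin x ≠ 0) :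
    HasDerivAt (fun y => y * Real.cot y) (Real.cot x + x * -(1 / Real.sin x ^ 2)) x := by
  have hd := (hasDerivAt_id x).fun_mul (cot_hasDerivAt hs)
  simpa using hd

lemma xcot_anti_Ioo : StrictAntiOn (fun x : ℝ => x * Real.cot x) (Set.Ioo 0 Real.pi) := by
  apply strictAntiOn_of_hasDerivWithinAt_neg (convex_Ioo 0 Real.pi)
    (f' := fun x => Real.cot x + x * -(1 / Real.sin x ^ 2))
  · intro x hx
    have hs : Real.sin x ≠ 0 :=
      (Real.sin_pos_of_pos_of_lt_pi hx.1 hx.2).ne'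
    exact (g_hasDerivAt hs).continuousAt.continuousWithinAt
  · intro x hx
    rw [interior_Ioo] at hx
    have hs : Real.sin x ≠ 0 := (Real.sin_pos_of_pos_of_lt_pi hx.1 hx.2).ne'
    exact (g_hasDerivAt hs).hasDerivWithinAt
  · intro x hx
    rw [interior_Ioo] at hx
    have hs : 0 < Real.sin x := Real.sin_pos_of_pos_of_lt_pi hx.1 hx.2
    obtain ⟨hx1, hx2⟩ := hx
    have h2 : Real.sin x * Real.cos x < x := by
      have := Real.sin_lt (by linarith : (0:ℝ) < 2 * x)
      have := Real.sin_two_mul x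
      nlinarith
    rw [Real.cot_eq_cos_div_sin]
    have : Real.cos x / Real.sin x + x * -(1 / Real.sin x ^ 2)
        = (Real.sin x * Real.cos x - x) / Real.sin x ^ 2 := by
      field_simp
      ring
    rw [this]
    exact div_neg_of_neg_of_pos (by linarith) (by positivity)

/-- The function `a : [0, π) → ℝ` defined by `a 0 = 1` and `a x = x * cot x`
for `0 < x < π` is strictly decreasing on `[0, π)`. -/
theorem xcot_strictAntiOn :
    StrictAntiOn (fun x : ℝ => if x = 0 then 1 else x * Real.cot x)
      (Set.Ico 0 Real.pi) := by
  intro x hx y hy hxy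
  rcases eq_or_lt_of_le hx.1 with h0 | h0
  · have hy0 : y ≠ 0 := by intro h; rw [← h0, h] at hxy; exact lt_irrefl _ hxy
    simp only [← h0, if_pos rfl, if_neg hy0]
    exact xcot_lt_one (by rw [← h0] at hxy; exact hxy) hy.2
  · have hx0 : x ≠ 0 := h0.ne'
    have hy0 : y ≠ 0 := (h0.trans hxy).ne'
    simp only [if_neg hx0, if_neg hy0]
    exact xcot_anti_Ioo ⟨h0, hx.2⟩ ⟨h0.trans hxy, hy.2⟩ hxy
end

section
/- The function c : (0, π) → ℝ defined by c(x) = (1 − x·cot(x))/x² is strictly increasing, satisfies c(x) → 1/3 as x → 0+, and c(π/2) = 4/π². Consequently, 1 − x·cot(x) ≤ (4/π²)·x² for all 0 < x ≤ π/2. -/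
open Real Set Filter

/-- `sin x - x cos x > 0` on `(0, π)`. -/
lemma aux_sin_sub_pos : ∀ x ∈ Set.Ioo (0:ℝ) Real.pi, 0 < Real.sin x - x * Real.cos x := by
  have hd : ∀ x : ℝ, HasDerivAt (fun t : ℝ => Real.sin t - t * Real.cos t) (x * Real.sin x) x := by
    intro x
    have h := (Real.hasDerivAt_sin x).sub ((hasDerivAt_id x).mul (Real.hasDerivAt_cos x))
    refine h.congr_deriv (Eq.symm ?_)
    simp [id, mul_comm]
  have hmono : StrictMonoOn (fun t : ℝ => Real.sin t - t * Real.cos t) (Set.Icc 0 Real.pi) := by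
    apply strictMonoOn_of_deriv_pos (convex_Icc 0 Real.pi)
    · exact (Real.continuous_sin.sub (continuous_id.mul Real.continuous_cos)).continuousOn
    · intro x hx
      rw [interior_Icc] at hx
      rw [(hd x).deriv]
      exact mul_pos hx.1 (Real.sin_pos_of_pos_of_lt_pi hx.1 hx.2)
  intro x hx
  have h0 : (fun t : ℝ => Real.sin t - t * Real.cos t) 0 < (fun t : ℝ => Real.sin t - t * Real.cos t) x := by
    apply hmono (Set.left_mem_Icc.mpr Real.pi_pos.le) ⟨hx.1.le, hx.2.le⟩ hx.1
  simpa using h0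

/-- `G x = x² + x sin x cos x - 2 sin²x > 0` on `(0, π)`. -/
lemma aux_G_pos : ∀ x ∈ Set.Ioo (0:ℝ) Real.pi,
    0 < x ^ 2 + x * Real.sin x * Real.cos x - 2 * Real.sin x ^ 2 := by
  set G' : ℝ → ℝ := fun t => 2 * t + t * (Real.cos t ^ 2 - Real.sin t ^ 2) - 3 * Real.sin t * Real.cos t with hG'
  have hdG : ∀ x : ℝ, HasDerivAt (fun t : ℝ => t ^ 2 + t * Real.sin t * Real.cos t - 2 * Real.sin t ^ 2) (G' x) x := by
    intro x
    have h := ((hasDerivAt_pow 2 x).add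
        (((hasDerivAt_id x).mul (Real.hasDerivAt_sin x)).mul (Real.hasDerivAt_cos x))).sub
        ((Real.hasDerivAt_sin x).pow 2 |>.const_mul 2)
    refine h.congr_deriv (Eq.symm ?_)
    simp [hG', id]
    nlinarith [Real.sin_sq_add_cos_sq x]
  have hdG' : ∀ x : ℝ, HasDerivAt G' (4 * Real.sin x * (Real.sin x - x * Real.cos x)) x := by
    intro x
    have h := (((hasDerivAt_id x).const_mul 2).add
        ((hasDerivAt_id x).mul (((Real.hasDerivAt_cos x).pow 2).sub ((Real.hasDerivAt_sin x).pow 2)))).sub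
        ((((Real.hasDerivAt_sin x).const_mul 3).mul (Real.hasDerivAt_cos x)))
    refine h.congr_deriv (Eq.symm ?_)
    simp [id]
    nlinarith [Real.sin_sq_add_cos_sq x]
  have hG'mono : StrictMonoOn G' (Set.Icc 0 Real.pi) := by
    apply strictMonoOn_of_deriv_pos (convex_Icc 0 Real.pi)
    · exact (Continuous.continuousOn (by fun_prop))
    · intro x hx
      rw [interior_Icc] at hx
      rw [(hdG' x).deriv]
      have hs := Real.sin_pos_of_pos_of_lt_pi hx.1 hx.2
      have := aux_sin_sub_pos x hx
      positivity
  have hG'pos : ∀ x ∈ Set.Ioo (0:ℝ) Real.pi, 0 < G' x := by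
    intro x hx
    have h0 : G' 0 < G' x := hG'mono (Set.left_mem_Icc.mpr Real.pi_pos.le) ⟨hx.1.le, hx.2.le⟩ hx.1
    simpa [hG'] using h0
  have hGmono : StrictMonoOn (fun t : ℝ => t ^ 2 + t * Real.sin t * Real.cos t - 2 * Real.sin t ^ 2) (Set.Icc 0 Real.pi) := by
    apply strictMonoOn_of_deriv_pos (convex_Icc 0 Real.pi)
    · exact (Continuous.continuousOn (by fun_prop))
    · intro x hx
      rw [interior_Icc] at hx
      rw [(hdG x).deriv]
      exact hG'pos x hx
  intro x hx
  have h0 := hGmono (Set.left_mem_Icc.mpr Real.pi_pos.le) ⟨hx.1.le, hx.2.le⟩ hx.1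
  simpa using h0

/-- The function `c : (0, π) → ℝ`, `c x = (1 - x * cot x) / x ^ 2`, is strictly
increasing, tends to `1/3` as `x → 0+`, and satisfies `c (π/2) = 4/π²`.
Consequently, `1 - x * cot x ≤ (4/π²) * x ^ 2` for all `0 < x ≤ π/2`. -/
theorem one_sub_xcot_div_sq :
    StrictMonoOn (fun x : ℝ => (1 - x * Real.cot x) / x ^ 2) (Set.Ioo 0 Real.pi) ∧
    Filter.Tendsto (fun x : ℝ => (1 - x * Real.cot x) / x ^ 2)
      (nhdsWithin 0 (Set.Ioi 0)) (nhds (1 / 3)) ∧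
    (1 - Real.pi / 2 * Real.cot (Real.pi / 2)) / (Real.pi / 2) ^ 2 = 4 / Real.pi ^ 2 ∧
    ∀ x : ℝ, 0 < x → x ≤ Real.pi / 2 →
      1 - x * Real.cot x ≤ 4 / Real.pi ^ 2 * x ^ 2 := by
  have hpi := Real.pi_pos
  -- rewriting of c on (0, π)
  have key : ∀ x ∈ Set.Ioo (0:ℝ) Real.pi,
      (1 - x * Real.cot x) / x ^ 2 = (Real.sin x - x * Real.cos x) / (x ^ 2 * Real.sin x) := by
    intro x hx
    have hs : Real.sin x ≠ 0 := (Real.sin_pos_of_pos_of_lt_pi hx.1 hx.2).ne'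
    have hx0 : x ≠ 0 := hx.1.ne'
    have hs' : 0 < Real.sin x := Real.sin_pos_of_pos_of_lt_pi hx.1 hx.2
    rw [Real.cot_eq_cos_div_sin, div_eq_div_iff (by positivity) (by positivity)]
    field_simp
  -- derivative of the rewritten function
  have hderiv : ∀ x ∈ Set.Ioo (0:ℝ) Real.pi,
      HasDerivAt (fun t : ℝ => (Real.sin t - t * Real.cos t) / (t ^ 2 * Real.sin t))
        ((x * (x ^ 2 + x * Real.sin x * Real.cos x - 2 * Real.sin x ^ 2)) /
          (x ^ 2 * Real.sin x) ^ 2) x := by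
    intro x hx
    have hs : Real.sin x ≠ 0 := (Real.sin_pos_of_pos_of_lt_pi hx.1 hx.2).ne'
    have hx0 : x ≠ 0 := hx.1.ne'
    have hN : HasDerivAt (fun t : ℝ => Real.sin t - t * Real.cos t) (x * Real.sin x) x := by
      have h := (Real.hasDerivAt_sin x).sub ((hasDerivAt_id x).mul (Real.hasDerivAt_cos x))
      refine h.congr_deriv (Eq.symm ?_)
      simp [id, mul_comm]
    have hD : HasDerivAt (fun t : ℝ => t ^ 2 * Real.sin t)
        (2 * x * Real.sin x + x ^ 2 * Real.cos x) x := by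
      have h := (hasDerivAt_pow 2 x).mul (Real.hasDerivAt_sin x)
      refine h.congr_deriv (Eq.symm ?_)
      ring
    have hDne : x ^ 2 * Real.sin x ≠ 0 := mul_ne_zero (pow_ne_zero 2 hx0) hs
    have h := hN.div hD hDne
    refine h.congr_deriv (Eq.symm ?_)
    rw [div_eq_div_iff (by positivity) (by positivity)]
    linear_combination (-(x^7 * Real.sin x^2)) * (Real.sin_sq_add_cos_sq x)
  -- strict monotonicity of the rewritten function
  have hmonoH : StrictMonoOn (fun t : ℝ => (Real.sin t - t * Real.cos t) / (t ^ 2 * Real.sin t))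
      (Set.Ioo 0 Real.pi) := by
    apply strictMonoOn_of_deriv_pos (convex_Ioo 0 Real.pi)
    · intro x hx
      exact (hderiv x hx).continuousAt.continuousWithinAt
    · intro x hx
      rw [interior_Ioo] at hx
      rw [(hderiv x hx).deriv]
      have hs : 0 < Real.sin x := Real.sin_pos_of_pos_of_lt_pi hx.1 hx.2
      have hG := aux_G_pos x hx
      exact div_pos (mul_pos hx.1 hG) (pow_pos (mul_pos (pow_pos hx.1 2) hs) 2)
  have hmono : StrictMonoOn (fun x : ℝ => (1 - x * Real.cot x) / x ^ 2) (Set.Ioo 0 Real.pi) := by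
    intro a ha b hb hab
    simp only
    rw [key a ha, key b hb]
    exact hmonoH ha hb hab
  -- the limit
  have hsinx : Tendsto (fun x : ℝ => Real.sin x / x) (nhdsWithin 0 (Set.Ioi 0)) (nhds 1) := by
    have h := Real.hasDerivAt_sin 0
    rw [hasDerivAt_iff_tendsto_slope] at h
    have h2 : Tendsto (slope Real.sin 0) (nhdsWithin 0 (Set.Ioi 0)) (nhds 1) := by
      simpa using h.mono_left (nhdsWithin_mono _ (by intro x hx; simpa using ne_of_gt hx))
    refine h2.congr fun x => ?_
    simp [slope_def_field, div_eq_mul_inv]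
  have hmem : Set.Ioo (0:ℝ) (Real.pi/2) ∈ nhdsWithin (0:ℝ) (Set.Ioi 0) :=
    Ioo_mem_nhdsGT Real.pi_div_two_pos
  have hdiv : Tendsto (fun x : ℝ => x * Real.sin x / (2 * x * Real.sin x + x ^ 2 * Real.cos x))
      (nhdsWithin 0 (Set.Ioi 0)) (nhds (1/3)) := by
    have h1 : Tendsto (fun x : ℝ => (Real.sin x / x) / (2 * (Real.sin x / x) + Real.cos x))
        (nhdsWithin 0 (Set.Ioi 0)) (nhds (1/3)) := by
      have hcos : Tendsto (fun x : ℝ => Real.cos x) (nhdsWithin 0 (Set.Ioi 0)) (nhds 1) := by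
        simpa using (Real.continuous_cos.tendsto 0).mono_left nhdsWithin_le_nhds
      have hden : Tendsto (fun x : ℝ => 2 * (Real.sin x / x) + Real.cos x)
          (nhdsWithin 0 (Set.Ioi 0)) (nhds 3) := by
        have h3 := ((hsinx.const_mul 2).add hcos)
        norm_num at h3
        exact h3
      have h13 := hsinx.div hden (by norm_num)
      norm_num at h13
      convert h13 using 2 <;> norm_num
    refine Tendsto.congr' ?_ h1
    filter_upwards [hmem] with x hx
    have hx0 : x ≠ 0 := hx.1.ne'
    have hs : 0 < Real.sin x := Real.sin_pos_of_pos_of_lt_pi hx.1 (hx.2.trans (half_lt_self hpi))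
    have hc : 0 < Real.cos x := Real.cos_pos_of_mem_Ioo ⟨by linarith [hx.1, Real.pi_div_two_pos], hx.2⟩
    have hb : (0:ℝ) < 2 * (Real.sin x / x) + Real.cos x :=
      add_pos (mul_pos two_pos (div_pos hs hx.1)) hc
    have hd : (0:ℝ) < 2 * x * Real.sin x + x ^ 2 * Real.cos x :=
      add_pos (mul_pos (mul_pos two_pos hx.1) hs) (mul_pos (pow_pos hx.1 2) hc)
    rw [div_eq_div_iff hb.ne' hd.ne']
    field_simp
  have hlim : Tendsto (fun x : ℝ =>
      (Real.sin x - x * Real.cos x) / (x ^ 2 * Real.sin x))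
      (nhdsWithin 0 (Set.Ioi 0)) (nhds (1/3)) := by
    apply HasDerivAt.lhopital_zero_nhdsGT
      (f' := fun x => x * Real.sin x) (g' := fun x => 2 * x * Real.sin x + x ^ 2 * Real.cos x)
    · filter_upwards with x
      have h := (Real.hasDerivAt_sin x).sub ((hasDerivAt_id x).mul (Real.hasDerivAt_cos x))
      refine h.congr_deriv (Eq.symm ?_)
      simp [id, mul_comm]
    · filter_upwards with x
      have h := (hasDerivAt_pow 2 x).mul (Real.hasDerivAt_sin x)
      refine h.congr_deriv (Eq.symm ?_)
      ring
    · filter_upwards [hmem] with x hx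
      have hs : 0 < Real.sin x := Real.sin_pos_of_pos_of_lt_pi hx.1 (hx.2.trans (half_lt_self hpi))
      have hc : 0 < Real.cos x := Real.cos_pos_of_mem_Ioo ⟨by linarith [hx.1, Real.pi_div_two_pos], hx.2⟩
      exact (add_pos (mul_pos (mul_pos two_pos hx.1) hs) (mul_pos (pow_pos hx.1 2) hc)).ne'
    · have : Tendsto (fun x : ℝ => Real.sin x - x * Real.cos x) (nhds 0) (nhds 0) := by
        have := (Real.continuous_sin.sub (continuous_id.mul Real.continuous_cos)).tendsto 0
        simpa [Pi.sub_def, Pi.mul_def] using this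
      exact this.mono_left nhdsWithin_le_nhds
    · have : Tendsto (fun x : ℝ => x ^ 2 * Real.sin x) (nhds 0) (nhds 0) := by
        have := ((continuous_pow 2).mul Real.continuous_sin).tendsto 0
        simpa [Pi.mul_def] using this
      exact this.mono_left nhdsWithin_le_nhds
    · exact hdiv
  have hlimC : Tendsto (fun x : ℝ => (1 - x * Real.cot x) / x ^ 2)
      (nhdsWithin 0 (Set.Ioi 0)) (nhds (1/3)) := by
    refine Tendsto.congr' ?_ hlim
    filter_upwards [hmem] with x hx
    exact (key x ⟨hx.1, hx.2.trans (half_lt_self hpi)⟩).symm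
  -- the value at π/2
  have hval : (1 - Real.pi / 2 * Real.cot (Real.pi / 2)) / (Real.pi / 2) ^ 2 = 4 / Real.pi ^ 2 := by
    rw [Real.cot_eq_cos_div_sin, Real.cos_pi_div_two, Real.sin_pi_div_two]
    rw [div_eq_div_iff (by positivity) (by positivity)]
    ring
  refine ⟨hmono, hlimC, hval, ?_⟩
  intro x hx hx2
  have hxIoo : x ∈ Set.Ioo 0 Real.pi := ⟨hx, hx2.trans_lt (half_lt_self hpi)⟩
  have hpIoo : Real.pi / 2 ∈ Set.Ioo 0 Real.pi := ⟨Real.pi_div_two_pos, half_lt_self hpi⟩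
  have hle : (1 - x * Real.cot x) / x ^ 2 ≤ 4 / Real.pi ^ 2 := by
    rcases eq_or_lt_of_le hx2 with h | h
    · rw [h, hval]
    · have := hmono hxIoo hpIoo h
      simp only at this
      rw [hval] at this
      exact this.le
  have hx2pos : (0:ℝ) < x ^ 2 := by positivity
  calc 1 - x * Real.cot x = (1 - x * Real.cot x) / x ^ 2 * x ^ 2 := by
        field_simp
    _ ≤ 4 / Real.pi ^ 2 * x ^ 2 := mul_le_mul_of_nonneg_right hle hx2pos.le
end

section
/- Suppose m is a positive integer, f : (0,∞) → ℝ is bounded and non-decreasing, g : (0,∞) → ℝ is non-negative and measurable, limsup_{t→0+} f(t)/tᵐ ≥ 1, and, setting L := lim_{t→∞} f(t) and ρ₀ := (2^{m+1}·L)^{1/m}, the inequality f(σ)/σᵐ ≤ f(ρ)/ρᵐ + ∫_σ^ρ g(t)/tᵐ dt holds for all 0 < σ < ρ ≤ ρ₀. Then there exists ρ with 0 < ρ ≤ ρ₀ such that f(5ρ) < (5ᵐ/2)·ρ₀·g(ρ). -/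
open MeasureTheory

private lemma real_limsup_le_of_ev {α : Type*} {l : Filter α} {u : α → ℝ} {a : ℝ}
    (ha : 0 ≤ a) (h : ∀ᶠ x in l, u x ≤ a) : Filter.limsup u l ≤ a := by
  rw [Filter.limsup_eq]
  by_cases hb : BddBelow {b : ℝ | ∀ᶠ x in l, u x ≤ b}
  · exact csInf_le hb h
  · rw [Real.sInf_of_not_bddBelow hb]; exact ha

set_option maxHeartbeats 1600000 in
/-- Simon's covering-type lemma: if `f : (0,∞) → ℝ` is bounded and non-decreasing
with `limsup_{t→0+} f t / t ^ m ≥ 1`, `g : (0,∞) → ℝ` is non-negative and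
measurable, `L = lim_{t→∞} f t`, `ρ₀ = (2 ^ (m+1) * L) ^ (1/m)`, and
`f σ / σ ^ m ≤ f ρ / ρ ^ m + ∫_σ^ρ g t / t ^ m dt` for all `0 < σ < ρ ≤ ρ₀`,
then there is `ρ` with `0 < ρ ≤ ρ₀` and `f (5ρ) < (5 ^ m / 2) * ρ₀ * g ρ`. -/
theorem simon_covering_lemma (m : ℕ) (hm : 0 < m) (f g : ℝ → ℝ)
    (hf_bdd : ∃ C : ℝ, ∀ t ∈ Set.Ioi (0 : ℝ), |f t| ≤ C)
    (hf_mono : MonotoneOn f (Set.Ioi 0))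
    (hg_nonneg : ∀ t ∈ Set.Ioi (0 : ℝ), 0 ≤ g t)
    (hg_meas : Measurable g)
    (h_limsup : 1 ≤ Filter.limsup (fun t => f t / t ^ m) (nhdsWithin 0 (Set.Ioi 0)))
    (L : ℝ) (hL : Filter.Tendsto f Filter.atTop (nhds L))
    (ρ₀ : ℝ) (hρ₀ : ρ₀ = (2 ^ (m + 1) * L) ^ (1 / (m : ℝ)))
    (h_mono_ineq : ∀ σ ρ : ℝ, 0 < σ → σ < ρ → ρ ≤ ρ₀ →
      ENNReal.ofReal (f σ / σ ^ m) ≤ ENNReal.ofReal (f ρ / ρ ^ m) +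
        ∫⁻ t in Set.Ioo σ ρ, ENNReal.ofReal (g t / t ^ m)) :
    ∃ ρ : ℝ, 0 < ρ ∧ ρ ≤ ρ₀ ∧ f (5 * ρ) < 5 ^ m / 2 * ρ₀ * g ρ := by
  by_contra hcon
  push_neg at hcon
  -- f is positive on (0,∞)
  have hfpos : ∀ t : ℝ, 0 < t → 0 < f t := by
    intro t ht
    by_contra hle
    push_neg at hle
    have hev : ∀ᶠ s in nhdsWithin 0 (Set.Ioi 0), f s / s ^ m ≤ 0 := by
      filter_upwards [Ioo_mem_nhdsGT_of_mem ⟨le_refl (0:ℝ), ht⟩] with s hs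
      have hfs : f s ≤ f t := hf_mono hs.1 ht hs.2.le
      exact div_nonpos_of_nonpos_of_nonneg (hfs.trans hle) (pow_nonneg hs.1.le m)
    have := real_limsup_le_of_ev le_rfl hev
    linarith
  -- f ≤ L
  have hfleL : ∀ t : ℝ, 0 < t → f t ≤ L := by
    intro t ht
    refine ge_of_tendsto hL ?_
    filter_upwards [Filter.eventually_ge_atTop t] with s hs
    exact hf_mono ht (lt_of_lt_of_le ht hs) hs
  have hLpos : 0 < L := lt_of_lt_of_le (hfpos 1 one_pos) (hfleL 1 one_pos)
  have hbase : (0:ℝ) < 2 ^ (m + 1) * L := by positivity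
  have hρpos : 0 < ρ₀ := by rw [hρ₀]; exact Real.rpow_pos_of_pos hbase _
  have hmne : (m : ℝ) ≠ 0 := Nat.cast_ne_zero.mpr hm.ne'
  have hρm : ρ₀ ^ m = 2 ^ (m + 1) * L := by
    rw [hρ₀, ← Real.rpow_natCast ((2 ^ (m + 1) * L) ^ (1 / (m : ℝ))) m,
      ← Real.rpow_mul hbase.le, one_div, inv_mul_cancel₀ hmne, Real.rpow_one]
  set p2 : ℝ := 2 ^ m with hp2def
  set p5 : ℝ := 5 ^ m with hp5def
  have hp2pos : 0 < p2 := by positivity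
  have hp5pos : 0 < p5 := by positivity
  have hp2 : 2 ≤ p2 := by
    calc (2:ℝ) = 2 ^ 1 := (pow_one 2).symm
    _ ≤ 2 ^ m := pow_le_pow_right₀ (by norm_num) hm
  have hp5 : 5 ≤ p5 := by
    calc (5:ℝ) = 5 ^ 1 := (pow_one 5).symm
    _ ≤ 5 ^ m := pow_le_pow_right₀ (by norm_num) hm
  have hρm' : ρ₀ ^ m = 2 * p2 * L := by
    rw [hρm, pow_succ]; ring
  set c : ℝ := 2 / (p5 * ρ₀) with hcdef
  have hcpos : 0 < c := by positivity
  -- the contradiction hypothesis, rewritten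
  have hg_le : ∀ t : ℝ, 0 < t → t ≤ ρ₀ → g t ≤ c * f (5 * t) := by
    intro t ht htρ
    have h1 := hcon t ht htρ
    have h2 := mul_le_mul_of_nonneg_left h1 hcpos.le
    have hone : c * (5 ^ m / 2 * ρ₀) = 1 := by
      rw [hcdef, hp5def]
      field_simp
    calc g t = c * (5 ^ m / 2 * ρ₀) * g t := by rw [hone, one_mul]
      _ = c * (5 ^ m / 2 * ρ₀ * g t) := by ring
      _ ≤ c * f (5 * t) := h2
  -- main bound
  have key : ∀ σ : ℝ, 0 < σ → σ < ρ₀ → f σ / σ ^ m ≤ 5 / 6 := by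
    intro σ hσ hσρ
    set A : ENNReal := ∫⁻ t in Set.Ioo σ ρ₀, ENNReal.ofReal (g t / t ^ m) with hAdef
    -- A is finite
    have hAfin : A ≠ ⊤ := by
      have hb : A ≤ ENNReal.ofReal (c * L / σ ^ m) * volume (Set.Ioo σ ρ₀) := by
        rw [hAdef]
        calc ∫⁻ t in Set.Ioo σ ρ₀, ENNReal.ofReal (g t / t ^ m)
            ≤ ∫⁻ _ in Set.Ioo σ ρ₀, ENNReal.ofReal (c * L / σ ^ m) := by
              refine setLIntegral_mono measurable_const fun t ht => ?_
              refine ENNReal.ofReal_le_ofReal ?_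
              have htpos : 0 < t := lt_trans hσ ht.1
              have h1 : g t ≤ c * L :=
                (hg_le t htpos ht.2.le).trans
                  (mul_le_mul_of_nonneg_left (hfleL (5 * t) (by linarith)) hcpos.le)
              have h2 : σ ^ m ≤ t ^ m := pow_le_pow_left₀ hσ.le ht.1.le m
              exact div_le_div₀ (by positivity) h1 (by positivity) h2
          _ = ENNReal.ofReal (c * L / σ ^ m) * volume (Set.Ioo σ ρ₀) :=
              setLIntegral_const _ _
      refine ne_top_of_le_ne_top ?_ hb
      rw [Real.volume_Ioo]
      exact ENNReal.mul_ne_top ENNReal.ofReal_ne_top ENNReal.ofReal_ne_top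
    clear_value A
    set a : ℝ := A.toReal with hadef
    have ha0 : 0 ≤ a := ENNReal.toReal_nonneg
    set q : ℝ := f ρ₀ / ρ₀ ^ m with hqdef
    have hq0 : 0 < q := div_pos (hfpos ρ₀ hρpos) (by positivity)
    have hqle : q ≤ 1 / (2 * p2) := by
      rw [hqdef, div_le_div_iff₀ (by positivity) (by positivity)]
      have := hfleL ρ₀ hρpos
      nlinarith [hρm']
    -- F τ ≤ q + a for σ < τ ≤ ρ₀
    have hF : ∀ τ : ℝ, σ < τ → τ ≤ ρ₀ → f τ / τ ^ m ≤ q + a := by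
      intro τ hστ hτρ
      rcases eq_or_lt_of_le hτρ with h | h
      · rw [h]; exact le_add_of_nonneg_right ha0
      · have hτpos : 0 < τ := lt_trans hσ hστ
        have h1 := h_mono_ineq τ ρ₀ hτpos h le_rfl
        have h2 : (∫⁻ t in Set.Ioo τ ρ₀, ENNReal.ofReal (g t / t ^ m)) ≤ A := by
          rw [hAdef]
          exact lintegral_mono_set (Set.Ioo_subset_Ioo_left hστ.le)
        have h3 : ENNReal.ofReal (f τ / τ ^ m) ≤ ENNReal.ofReal q + A :=
          h1.trans (add_le_add le_rfl h2)
        have htop : ENNReal.ofReal q + A ≠ ⊤ :=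
          ENNReal.add_ne_top.mpr ⟨ENNReal.ofReal_ne_top, hAfin⟩
        have h4 := ENNReal.toReal_mono htop h3
        rw [ENNReal.toReal_ofReal (div_nonneg (hfpos τ hτpos).le (pow_nonneg hτpos.le m)),
          ENNReal.toReal_add ENNReal.ofReal_ne_top hAfin,
          ENNReal.toReal_ofReal hq0.le] at h4
        exact h4
    -- three pieces
    set C1 : ℝ := c * (q + a) * p5 with hC1def
    set C2 : ℝ := c * L * p5 / ρ₀ ^ m with hC2def
    set C3 : ℝ := c * L * p2 / ρ₀ ^ m with hC3def
    have hC1nn : 0 ≤ C1 := by positivity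
    have hC2nn : 0 ≤ C2 := by positivity
    have hC3nn : 0 ≤ C3 := by positivity
    have hpiece1 : (∫⁻ t in Set.Ioo σ (ρ₀ / 5), ENNReal.ofReal (g t / t ^ m))
        ≤ ENNReal.ofReal C1 * ENNReal.ofReal (ρ₀ / 5) := by
      calc (∫⁻ t in Set.Ioo σ (ρ₀ / 5), ENNReal.ofReal (g t / t ^ m))
          ≤ ∫⁻ _ in Set.Ioo σ (ρ₀ / 5), ENNReal.ofReal C1 := by
            refine setLIntegral_mono measurable_const fun t ht => ?_
            refine ENNReal.ofReal_le_ofReal ?_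
            have htpos : 0 < t := lt_trans hσ ht.1
            have h5tρ : 5 * t ≤ ρ₀ := by nlinarith [ht.2]
            have htρ : t ≤ ρ₀ := by nlinarith
            have hF5t : f (5 * t) / (5 * t) ^ m ≤ q + a :=
              hF (5 * t) (by linarith [ht.1]) h5tρ
            have hf5t : f (5 * t) ≤ (q + a) * (p5 * t ^ m) := by
              have h5pos : (0:ℝ) < (5 * t) ^ m := by positivity
              have h0 := (div_le_iff₀ h5pos).mp hF5t
              calc f (5 * t) ≤ (q + a) * (5 * t) ^ m := h0
                _ = (q + a) * (p5 * t ^ m) := by rw [mul_pow, hp5def]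
            rw [div_le_iff₀ (by positivity : (0:ℝ) < t ^ m)]
            calc g t ≤ c * f (5 * t) := hg_le t htpos htρ
              _ ≤ c * ((q + a) * (p5 * t ^ m)) := mul_le_mul_of_nonneg_left hf5t hcpos.le
              _ = C1 * t ^ m := by rw [hC1def]; ring
        _ = ENNReal.ofReal C1 * volume (Set.Ioo σ (ρ₀ / 5)) := setLIntegral_const _ _
        _ ≤ ENNReal.ofReal C1 * ENNReal.ofReal (ρ₀ / 5) := by
            refine mul_le_mul_of_nonneg_left ?_ (zero_le')
            rw [Real.volume_Ioo]
            exact ENNReal.ofReal_le_ofReal (by linarith)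
    have hpiece2 : (∫⁻ t in Set.Ico (ρ₀ / 5) (ρ₀ / 2), ENNReal.ofReal (g t / t ^ m))
        ≤ ENNReal.ofReal C2 * ENNReal.ofReal (3 * ρ₀ / 10) := by
      calc (∫⁻ t in Set.Ico (ρ₀ / 5) (ρ₀ / 2), ENNReal.ofReal (g t / t ^ m))
          ≤ ∫⁻ _ in Set.Ico (ρ₀ / 5) (ρ₀ / 2), ENNReal.ofReal C2 := by
            refine setLIntegral_mono measurable_const fun t ht => ?_
            refine ENNReal.ofReal_le_ofReal ?_
            have htpos : 0 < t := lt_of_lt_of_le (by positivity) ht.1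
            have hgt : g t ≤ c * L :=
              (hg_le t htpos (by linarith [ht.2])).trans
                (mul_le_mul_of_nonneg_left (hfleL (5 * t) (by linarith)) hcpos.le)
            have htm : (ρ₀ / 5) ^ m ≤ t ^ m := pow_le_pow_left₀ (by positivity) ht.1 m
            have h5 : (ρ₀ / 5) ^ m = ρ₀ ^ m / p5 := by rw [div_pow, hp5def]
            calc g t / t ^ m ≤ (c * L) / ((ρ₀ / 5) ^ m) :=
                  div_le_div₀ (by positivity) hgt (by positivity) htm
              _ = C2 := by rw [h5, hC2def]; field_simp
        _ = ENNReal.ofReal C2 * volume (Set.Ico (ρ₀ / 5) (ρ₀ / 2)) := setLIntegral_const _ _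
        _ ≤ ENNReal.ofReal C2 * ENNReal.ofReal (3 * ρ₀ / 10) := by
            refine mul_le_mul_of_nonneg_left ?_ (zero_le')
            rw [Real.volume_Ico]
            exact ENNReal.ofReal_le_ofReal (by linarith)
    have hpiece3 : (∫⁻ t in Set.Ico (ρ₀ / 2) ρ₀, ENNReal.ofReal (g t / t ^ m))
        ≤ ENNReal.ofReal C3 * ENNReal.ofReal (ρ₀ / 2) := by
      calc (∫⁻ t in Set.Ico (ρ₀ / 2) ρ₀, ENNReal.ofReal (g t / t ^ m))
          ≤ ∫⁻ _ in Set.Ico (ρ₀ / 2) ρ₀, ENNReal.ofReal C3 := by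
            refine setLIntegral_mono measurable_const fun t ht => ?_
            refine ENNReal.ofReal_le_ofReal ?_
            have htpos : 0 < t := lt_of_lt_of_le (by positivity) ht.1
            have hgt : g t ≤ c * L :=
              (hg_le t htpos ht.2.le).trans
                (mul_le_mul_of_nonneg_left (hfleL (5 * t) (by linarith)) hcpos.le)
            have htm : (ρ₀ / 2) ^ m ≤ t ^ m := pow_le_pow_left₀ (by positivity) ht.1 m
            have h5 : (ρ₀ / 2) ^ m = ρ₀ ^ m / p2 := by rw [div_pow, hp2def]
            calc g t / t ^ m ≤ (c * L) / ((ρ₀ / 2) ^ m) :=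
                  div_le_div₀ (by positivity) hgt (by positivity) htm
              _ = C3 := by rw [h5, hC3def]; field_simp
        _ = ENNReal.ofReal C3 * volume (Set.Ico (ρ₀ / 2) ρ₀) := setLIntegral_const _ _
        _ ≤ ENNReal.ofReal C3 * ENNReal.ofReal (ρ₀ / 2) := by
            refine mul_le_mul_of_nonneg_left ?_ (zero_le')
            rw [Real.volume_Ico]
            exact ENNReal.ofReal_le_ofReal (by linarith)
    -- combine
    have hsub : Set.Ioo σ ρ₀ ⊆ Set.Ioo σ (ρ₀ / 5)
        ∪ (Set.Ico (ρ₀ / 5) (ρ₀ / 2) ∪ Set.Ico (ρ₀ / 2) ρ₀) := by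
      rintro t ⟨ht1, ht2⟩
      rcases lt_or_ge t (ρ₀ / 5) with h | h
      · exact Or.inl ⟨ht1, h⟩
      · rcases lt_or_ge t (ρ₀ / 2) with h' | h'
        · exact Or.inr (Or.inl ⟨h, h'⟩)
        · exact Or.inr (Or.inr ⟨h', ht2⟩)
    set R : ℝ := C1 * (ρ₀ / 5) + (C2 * (3 * ρ₀ / 10) + C3 * (ρ₀ / 2)) with hRdef
    have hRnn : 0 ≤ R := by positivity
    have hAR : A ≤ ENNReal.ofReal R := by
      rw [hAdef]
      calc (∫⁻ t in Set.Ioo σ ρ₀, ENNReal.ofReal (g t / t ^ m))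
          ≤ ∫⁻ t in Set.Ioo σ (ρ₀ / 5)
            ∪ (Set.Ico (ρ₀ / 5) (ρ₀ / 2) ∪ Set.Ico (ρ₀ / 2) ρ₀),
            ENNReal.ofReal (g t / t ^ m) := lintegral_mono_set hsub
        _ ≤ (∫⁻ t in Set.Ioo σ (ρ₀ / 5), ENNReal.ofReal (g t / t ^ m))
            + ∫⁻ t in Set.Ico (ρ₀ / 5) (ρ₀ / 2) ∪ Set.Ico (ρ₀ / 2) ρ₀,
              ENNReal.ofReal (g t / t ^ m) := lintegral_union_le _ _ _
        _ ≤ (∫⁻ t in Set.Ioo σ (ρ₀ / 5), ENNReal.ofReal (g t / t ^ m))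
            + ((∫⁻ t in Set.Ico (ρ₀ / 5) (ρ₀ / 2), ENNReal.ofReal (g t / t ^ m))
              + ∫⁻ t in Set.Ico (ρ₀ / 2) ρ₀, ENNReal.ofReal (g t / t ^ m)) :=
            add_le_add le_rfl (lintegral_union_le _ _ _)
        _ ≤ ENNReal.ofReal C1 * ENNReal.ofReal (ρ₀ / 5)
            + (ENNReal.ofReal C2 * ENNReal.ofReal (3 * ρ₀ / 10)
              + ENNReal.ofReal C3 * ENNReal.ofReal (ρ₀ / 2)) :=
            add_le_add hpiece1 (add_le_add hpiece2 hpiece3)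
        _ = ENNReal.ofReal R := by
            rw [hRdef, ENNReal.ofReal_add (by positivity) (by positivity),
              ENNReal.ofReal_add (by positivity) (by positivity),
              ENNReal.ofReal_mul hC1nn, ENNReal.ofReal_mul hC2nn, ENNReal.ofReal_mul hC3nn]
    have haR : a ≤ R := by
      have := ENNReal.toReal_mono ENNReal.ofReal_ne_top hAR
      rwa [ENNReal.toReal_ofReal hRnn] at this
    -- arithmetic
    have e1 : C1 * (ρ₀ / 5) = 2 / 5 * (q + a) := by
      rw [hC1def, hcdef]; field_simp
    have e2 : C2 * (3 * ρ₀ / 10) = 3 / (10 * p2) := by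
      rw [hC2def, hcdef, hρm']; field_simp
    have e3' : C3 * (ρ₀ / 2) = 1 / (2 * p5) := by
      rw [hC3def, hcdef, hρm']; field_simp
    have haR' : a ≤ 2 / 5 * (q + a) + (3 / (10 * p2) + 1 / (2 * p5)) := by
      rw [← e1, ← e2, ← e3']; exact haR
    have hb1 : 3 / (10 * p2) ≤ 3 / 20 := by
      rw [div_le_div_iff₀ (by positivity) (by norm_num)]; nlinarith
    have hb2 : 1 / (2 * p5) ≤ 1 / 10 := by
      rw [div_le_div_iff₀ (by positivity) (by norm_num)]; nlinarith
    have hq4 : q ≤ 1 / 4 := by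
      refine hqle.trans ?_
      rw [div_le_div_iff₀ (by positivity) (by norm_num)]; nlinarith
    have hFσ : f σ / σ ^ m ≤ q + a := by
      have h1 := h_mono_ineq σ ρ₀ hσ hσρ le_rfl
      rw [← hAdef] at h1
      have htop : ENNReal.ofReal q + A ≠ ⊤ :=
        ENNReal.add_ne_top.mpr ⟨ENNReal.ofReal_ne_top, hAfin⟩
      have h4 := ENNReal.toReal_mono htop h1
      rw [ENNReal.toReal_ofReal (div_nonneg (hfpos σ hσ).le (pow_nonneg hσ.le m)),
        ENNReal.toReal_add ENNReal.ofReal_ne_top hAfin,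
        ENNReal.toReal_ofReal hq0.le] at h4
      exact h4
    linarith
  -- conclude
  have hev : ∀ᶠ s in nhdsWithin 0 (Set.Ioi 0), f s / s ^ m ≤ 5 / 6 := by
    filter_upwards [Ioo_mem_nhdsGT_of_mem ⟨le_refl (0:ℝ), hρpos⟩] with s hs
    exact key s hs.1 hs.2
  have := real_limsup_le_of_ev (by norm_num) hev
  linarith
end
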